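/- Let 0 < b < a. There is a constant C such that for any complex z with |z| < 1, ∫_0^1 (log(1/t))^{b-1} |1 - t z|^{-a} dt ≤ C |1 - z|^{b-a}. Moreover if b > a the integral is bounded by a constant depending only on a and b, uniformly in |z| < 1. -/

import Mathlib

open MeasureTheory

-- measurability of the integrand
lemma lema_meas (a b : ℝ) (z : ℂ) :
    Measurable (fun t : ℝ => (Real.log (1 / t)) ^ (b - 1) * (‖1 - (t : ℂ) * z‖) ^ (-a)) := by
  apply Measurable.mul
  · exact (Real.measurable_log.comp (measurable_const.div measurable_id)).pow_const _
  · apply Measurable.pow_const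
    apply Continuous.measurable
    continuity

-- log lower bound
lemma lema_log_lb {t : ℝ} (ht : 0 < t) : 1 - t ≤ Real.log (1 / t) := by
  have h := Real.log_le_sub_one_of_pos ht
  rw [one_div, Real.log_inv]
  linarith

lemma lema_log_ub {t : ℝ} (ht : 1 / 2 ≤ t) (ht1 : t ≤ 1) : Real.log (1 / t) ≤ 2 * (1 - t) := by
  have ht0 : (0:ℝ) < t := by linarith
  have h := Real.log_le_sub_one_of_pos (show (0:ℝ) < 1 / t by positivity)
  have h2 : 1 / t - 1 = (1 - t) / t := by field_simp
  have h3 : (1 - t) / t ≤ 2 * (1 - t) := by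
    rw [div_le_iff₀ ht0]
    nlinarith
  linarith

-- modulus lower bound by 1 - t
lemma lema_M_lb {z : ℂ} (hz : ‖z‖ < 1) {t : ℝ} (ht0 : 0 ≤ t) (ht1 : t ≤ 1) :
    1 - t ≤ ‖1 - (t : ℂ) * z‖ := by
  have h1 : ‖(1 : ℂ)‖ - ‖(t : ℂ) * z‖ ≤ ‖1 - (t : ℂ) * z‖ := norm_sub_norm_le _ _
  have h2 : ‖(t : ℂ) * z‖ = t * ‖z‖ := by
    rw [norm_mul, Complex.norm_real, Real.norm_eq_abs, abs_of_nonneg ht0]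
  have h3 : t * ‖z‖ ≤ t := by
    nlinarith [norm_nonneg z]
  rw [h2] at h1
  simp only [norm_one] at *
  linarith

-- modulus lower bound by |1 - z| / 2
lemma lema_M_lb2 {z : ℂ} (hz : ‖z‖ < 1) {t : ℝ} (ht0 : 0 ≤ t) (ht1 : t ≤ 1) :
    ‖1 - z‖ ≤ 2 * ‖1 - (t : ℂ) * z‖ := by
  have key : (1 : ℂ) - z = (1 - (t : ℂ) * z) - ((1 : ℂ) - t) * z := by ring
  have h1 : ‖(1 : ℂ) - z‖ ≤ ‖1 - (t : ℂ) * z‖ + ‖((1 : ℂ) - t) * z‖ := by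
    rw [key]; exact norm_sub_le _ _
  have h2 : ‖((1 : ℂ) - t) * z‖ ≤ 1 - t := by
    rw [norm_mul]
    have : ((1 : ℂ) - t) = ((1 - t : ℝ) : ℂ) := by push_cast; ring
    rw [this, Complex.norm_real, Real.norm_eq_abs, abs_of_nonneg (by linarith)]
    nlinarith [norm_nonneg z, norm_nonneg z, hz]
  have h3 := lema_M_lb hz ht0 ht1
  calc ‖(1:ℂ) - z‖ ≤ ‖1 - (t : ℂ) * z‖ + (1 - t) := by linarith
    _ ≤ 2 * ‖1 - (t:ℂ) * z‖ := by linarith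

-- K bound: log(1/t)^(b-1) ≤ K (1-t)^(b-1) on (1/2, 1)
lemma lema_K_bound (b : ℝ) (hb : 0 < b) :
    ∃ K ≥ 1, ∀ t ∈ Set.Ioo (1/2 : ℝ) 1, (Real.log (1 / t)) ^ (b - 1) ≤ K * (1 - t) ^ (b - 1) := by
  rcases le_or_gt b 1 with hb1 | hb1
  · refine ⟨1, le_refl 1, fun t ht => ?_⟩
    rw [one_mul]
    exact Real.rpow_le_rpow_of_nonpos (by linarith [ht.2]) (lema_log_lb (by linarith [ht.1]))
      (by linarith)
  · refine ⟨2 ^ (b - 1), Real.one_le_rpow one_le_two (by linarith), fun t ht => ?_⟩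
    have h1 : Real.log (1 / t) ≤ 2 * (1 - t) := lema_log_ub ht.1.le ht.2.le
    have h0 : 0 ≤ Real.log (1 / t) := by linarith [lema_log_lb (show (0:ℝ) < t by linarith [ht.1]), ht.2]
    calc (Real.log (1 / t)) ^ (b - 1) ≤ (2 * (1 - t)) ^ (b - 1) :=
          Real.rpow_le_rpow h0 h1 (by linarith)
      _ = 2 ^ (b - 1) * (1 - t) ^ (b - 1) := Real.mul_rpow (by norm_num) (by linarith [ht.2])

-- integrability of log(1/t)^(b-1) near 0
lemma lema_int_log (b : ℝ) (hb : 0 < b) :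
    IntegrableOn (fun t : ℝ => (Real.log (1 / t)) ^ (b - 1)) (Set.Ioc 0 (1/2 : ℝ)) := by
  have hmeas : AEStronglyMeasurable (fun t : ℝ => (Real.log (1 / t)) ^ (b - 1))
      (volume.restrict (Set.Ioc 0 (1/2 : ℝ))) :=
    ((Real.measurable_log.comp (measurable_const.div measurable_id)).pow_const _).aestronglyMeasurable
  have hnn : ∀ t ∈ Set.Ioc (0:ℝ) (1/2 : ℝ), 0 ≤ Real.log (1 / t) := fun t ht => by
    linarith [lema_log_lb ht.1, ht.2]
  rcases le_or_gt b 1 with hb1 | hb1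
  · -- bounded by constant (log 2)^(b-1)
    apply Integrable.mono' ((integrableOn_const_iff (C := Real.log 2 ^ (b - 1))).mpr (Or.inr (by simp [Real.volume_Ioc])))
      hmeas
    filter_upwards [ae_restrict_mem measurableSet_Ioc] with t ht
    rw [Real.norm_eq_abs, abs_of_nonneg (Real.rpow_nonneg (hnn t ht) _)]
    have h2 : Real.log 2 ≤ Real.log (1 / t) := by
      apply Real.log_le_log (by norm_num)
      rw [le_one_div (by norm_num) ht.1]
      exact ht.2
    exact Real.rpow_le_rpow_of_nonpos (Real.log_pos (by norm_num)) h2 (by linarith)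
  · -- bounded by c * t^(-2⁻¹)
    set ε : ℝ := 1 / (2 * (b - 1)) with hε
    have hε0 : 0 < ε := by rw [hε]; apply div_pos one_pos; linarith
    have hint : IntegrableOn (fun t : ℝ => (1/ε) ^ (b-1) * t ^ (-2⁻¹ : ℝ))
        (Set.Ioc 0 (1/2 : ℝ)) := by
      have := intervalIntegrable_iff.mp
        ((intervalIntegral.intervalIntegrable_rpow' (by norm_num : (-1:ℝ) < -2⁻¹)).const_mul
          ((1/ε) ^ (b-1)) : IntervalIntegrable _ volume 0 (1/2))
      rwa [Set.uIoc_of_le (by norm_num : (0:ℝ) ≤ 1/2)] at this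
    apply Integrable.mono' hint hmeas
    filter_upwards [ae_restrict_mem measurableSet_Ioc] with t ht
    have ht0 : 0 < t := ht.1
    have hinv : (0:ℝ) < 1/t := by positivity
    rw [Real.norm_eq_abs, abs_of_nonneg (Real.rpow_nonneg (hnn t ht) _)]
    have h1 : Real.log (1 / t) ≤ (1/t) ^ ε / ε := Real.log_le_rpow_div hinv.le hε0
    have hεb : ε * (b-1) = 2⁻¹ := by
      have hne : b - 1 ≠ 0 := by linarith
      rw [hε]; field_simp
    calc (Real.log (1 / t)) ^ (b - 1) ≤ ((1/t) ^ ε / ε) ^ (b-1) :=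
          Real.rpow_le_rpow (hnn t ht) h1 (by linarith)
      _ = ((1/t) ^ ε) ^ (b-1) * (1/ε) ^ (b-1) := by
          rw [div_eq_mul_inv, Real.mul_rpow (Real.rpow_nonneg hinv.le _) (by positivity)]
          simp [one_div]
      _ = (1/ε) ^ (b-1) * t ^ (-2⁻¹ : ℝ) := by
          rw [← Real.rpow_mul hinv.le, hεb, mul_comm]
          congr 1
          rw [one_div, Real.inv_rpow ht0.le, ← Real.rpow_neg ht0.le]

-- generic comparison: integrability and integral bound from a pointwise bound
lemma lema_piece {f g : ℝ → ℝ} {s : Set ℝ} (hs : MeasurableSet s)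
    (hmf : AEStronglyMeasurable f (volume.restrict s))
    (hg : IntegrableOn g s) (h0 : ∀ t ∈ s, 0 ≤ f t) (hfg : ∀ t ∈ s, f t ≤ g t) :
    IntegrableOn f s ∧ (∫ t in s, f t) ≤ ∫ t in s, g t := by
  have hint : IntegrableOn f s := by
    apply Integrable.mono' hg hmf
    filter_upwards [ae_restrict_mem hs] with t ht
    rw [Real.norm_eq_abs, abs_of_nonneg (h0 t ht)]
    exact hfg t ht
  refine ⟨hint, integral_mono_of_nonneg ?_ hg ?_⟩ <;>
  · filter_upwards [ae_restrict_mem hs] with t ht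
    first
      | exact h0 t ht
      | exact hfg t ht

-- integral of (1-t)^r
lemma lema_int_one_sub {u v : ℝ} (r : ℝ) (huv : u ≤ v)
    (h : -1 < r ∨ r ≠ -1 ∧ v < 1) :
    (∫ t in Set.Ioc u v, (1 - t) ^ r) = ((1 - u) ^ (r + 1) - (1 - v) ^ (r + 1)) / (r + 1) := by
  rw [← intervalIntegral.integral_of_le huv]
  have hcomp := intervalIntegral.integral_comp_sub_left (a := u) (b := v) (fun x : ℝ => x ^ r) 1
  rw [hcomp, integral_rpow ?_]
  · rcases h with h | h
    · exact Or.inl h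
    · refine Or.inr ⟨h.1, Set.notMem_uIcc_of_lt (by linarith [h.2]) (by linarith [h.2])⟩

set_option maxHeartbeats 2000000 in
theorem lemashiti (a b : ℝ) (ha : 0 < a) (hb : 0 < b) :
    (b < a →
      ∃ C > 0, ∀ z : ℂ, ‖z‖ < 1 →
        ∫ t in Set.Ioo (0 : ℝ) 1,
            (Real.log (1 / t)) ^ (b - 1) * (‖1 - (t : ℂ) * z‖) ^ (-a) ≤
          C * (‖1 - z‖) ^ (b - a)) ∧
    (a < b →
      ∃ C > 0, ∀ z : ℂ, ‖z‖ < 1 →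
        ∫ t in Set.Ioo (0 : ℝ) 1,
            (Real.log (1 / t)) ^ (b - 1) * (‖1 - (t : ℂ) * z‖) ^ (-a) ≤
          C) := by
  obtain ⟨K, hK1, hKb⟩ := lema_K_bound b hb
  have hK0 : (0:ℝ) < K := lt_of_lt_of_le one_pos hK1
  set c0 := ∫ t in Set.Ioc (0:ℝ) (1/2), (Real.log (1/t))^(b-1) with hc0def
  clear_value c0
  have hc00 : 0 ≤ c0 := by
    rw [hc0def]
    exact setIntegral_nonneg measurableSet_Ioc (fun t ht =>
      Real.rpow_nonneg (by linarith [lema_log_lb ht.1, ht.2]) _)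
  have h2a : (0:ℝ) < 2 ^ a := Real.rpow_pos_of_pos two_pos a
  have hhalf : ((1:ℝ)/2) ^ (-a) = 2 ^ a := by
    rw [one_div, Real.inv_rpow (by norm_num : (0:ℝ) ≤ 2),
      Real.rpow_neg (by norm_num : (0:ℝ) ≤ 2), inv_inv]
  -- shared facts as functions of z
  have hmf : ∀ (z : ℂ) (s : Set ℝ), AEStronglyMeasurable
      (fun t : ℝ => (Real.log (1/t))^(b-1) * (‖1 - (t:ℂ)*z‖)^(-a))
      (volume.restrict s) := fun z s => (lema_meas a b z).aestronglyMeasurable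
  have hf0 : ∀ (z : ℂ), ∀ t ∈ Set.Ioo (0:ℝ) 1,
      0 ≤ (Real.log (1/t))^(b-1) * (‖1 - (t:ℂ)*z‖)^(-a) := fun z t ht =>
    mul_nonneg (Real.rpow_nonneg (by linarith [lema_log_lb ht.1, ht.2]) _)
      (Real.rpow_nonneg (norm_nonneg _) _)
  have hbd1 : ∀ (z : ℂ), ‖z‖ < 1 → ∀ t ∈ Set.Ioc (0:ℝ) (1/2),
      (Real.log (1/t))^(b-1) * (‖1 - (t:ℂ)*z‖)^(-a)
        ≤ 2^a * (Real.log (1/t))^(b-1) := by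
    intro z hz t ht
    have hM : (1:ℝ)/2 ≤ ‖1 - (t:ℂ)*z‖ := by
      have := lema_M_lb hz ht.1.le (by linarith [ht.2])
      linarith [ht.2]
    have h1 : (‖1 - (t:ℂ)*z‖)^(-a) ≤ 2^a := by
      rw [← hhalf]
      exact Real.rpow_le_rpow_of_nonpos (by norm_num) hM (by linarith)
    have h2 : 0 ≤ (Real.log (1/t))^(b-1) :=
      Real.rpow_nonneg (by linarith [lema_log_lb ht.1, ht.2]) _
    calc (Real.log (1/t))^(b-1) * (‖1 - (t:ℂ)*z‖)^(-a)
        ≤ (Real.log (1/t))^(b-1) * 2^a := mul_le_mul_of_nonneg_left h1 h2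
      _ = 2^a * (Real.log (1/t))^(b-1) := mul_comm _ _
  have hP1 : ∀ (z : ℂ), ‖z‖ < 1 →
      IntegrableOn (fun t : ℝ => (Real.log (1/t))^(b-1) * (‖1 - (t:ℂ)*z‖)^(-a))
        (Set.Ioc (0:ℝ) (1/2)) ∧
      (∫ t in Set.Ioc (0:ℝ) (1/2),
          (Real.log (1/t))^(b-1) * (‖1 - (t:ℂ)*z‖)^(-a)) ≤ 2^a * c0 := by
    intro z hz
    have h := lema_piece measurableSet_Ioc (hmf z _)
      ((lema_int_log b hb).const_mul (2^a))
      (fun t ht => hf0 z t ⟨ht.1, by linarith [ht.2]⟩) (hbd1 z hz)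
    refine ⟨h.1, h.2.trans_eq ?_⟩
    rw [hc0def, MeasureTheory.integral_const_mul]
  have hMlb : ∀ (z : ℂ), ‖z‖ < 1 → ∀ t ∈ Set.Ioo ((1:ℝ)/2) 1,
      (1 - t) ≤ ‖1 - (t:ℂ)*z‖ := fun z hz t ht =>
    lema_M_lb hz (by linarith [ht.1]) ht.2.le
  constructor
  · -- case b < a
    intro hba
    have hab : (0:ℝ) < a - b := by linarith
    have h2ab : (0:ℝ) < 2 ^ (a-b) := Real.rpow_pos_of_pos two_pos _
    have h2ab1 : (1:ℝ) ≤ 2 ^ (a-b) := Real.one_le_rpow one_le_two hab.le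
    refine ⟨(2^a * c0 + K * 2^(a-b)/(a-b) + K/b) * 2^(a-b), ?_, fun z hz => ?_⟩
    · have h1 : (0:ℝ) < K * 2^(a-b)/(a-b) := div_pos (mul_pos hK0 h2ab) hab
      have h2 : (0:ℝ) < K/b := div_pos hK0 hb
      have h3 : (0:ℝ) ≤ 2^a * c0 := mul_nonneg h2a.le hc00
      nlinarith
    · have hε0 : 0 < ‖1 - z‖ := by
        rw [norm_pos_iff]
        intro h
        rw [sub_eq_zero] at h
        rw [← h] at hz
        simp at hz
      set ε := ‖1 - z‖ with hεdef
      clear_value ε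
      have hε2 : ε ≤ 2 := by
        have h1 : ‖(1:ℂ) - z‖ ≤ ‖(1:ℂ)‖ + ‖z‖ := norm_sub_le _ _
        rw [norm_one, ← hεdef] at h1
        linarith
      set δ := ε/2 with hδdef
      clear_value δ
      have hδ0 : 0 < δ := by rw [hδdef]; linarith
      have hδ1 : δ ≤ 1 := by rw [hδdef]; linarith
      set m := max ((1:ℝ)/2) (1 - δ) with hmdef
      clear_value m
      have hm1 : (1/2:ℝ) ≤ m := by rw [hmdef]; exact le_max_left _ _
      have hm2 : m < 1 := by rw [hmdef]; exact max_lt (by norm_num) (by linarith)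
      have h1m0 : (0:ℝ) < 1 - m := by linarith
      have h1mδ : 1 - m ≤ δ := by
        rw [hmdef]
        have := le_max_right ((1:ℝ)/2) (1 - δ); linarith
      have hδba1 : 1 ≤ δ ^ (b-a) :=
        Real.one_le_rpow_of_pos_of_le_one_of_nonpos hδ0 hδ1 (by linarith)
      have hkey : (1-m)^(b-a) ≤ 2^(a-b) * δ^(b-a) := by
        rcases le_or_gt δ (1/2) with hc | hc
        · have hmeq : m = 1 - δ := by rw [hmdef]; exact max_eq_right (by linarith)
          rw [hmeq, sub_sub_cancel]
          nlinarith [Real.rpow_pos_of_pos hδ0 (b-a)]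
        · have hmeq : m = 1/2 := by rw [hmdef]; exact max_eq_left (by linarith)
          rw [hmeq, show (1:ℝ) - 1/2 = 2⁻¹ from by norm_num,
            Real.inv_rpow (by norm_num : (0:ℝ) ≤ 2),
            ← Real.rpow_neg (by norm_num : (0:ℝ) ≤ 2), neg_sub]
          nlinarith
      -- pointwise bounds on the two right pieces
      have hbd2 : ∀ t ∈ Set.Ioc ((1:ℝ)/2) m,
          (Real.log (1/t))^(b-1) * (‖1 - (t:ℂ)*z‖)^(-a)
            ≤ K * (1-t)^(b-a-1) := by
        intro t ht
        have ht' : t ∈ Set.Ioo ((1:ℝ)/2) 1 := ⟨ht.1, lt_of_le_of_lt ht.2 hm2⟩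
        have h1t : (0:ℝ) < 1 - t := by linarith [ht'.2]
        have hL := hKb t ht'
        have hM : (‖1 - (t:ℂ)*z‖)^(-a) ≤ (1-t)^(-a) :=
          Real.rpow_le_rpow_of_nonpos h1t (hMlb z hz t ht') (by linarith)
        calc (Real.log (1/t))^(b-1) * (‖1 - (t:ℂ)*z‖)^(-a)
            ≤ (K * (1-t)^(b-1)) * ((1-t)^(-a)) :=
              mul_le_mul hL hM (Real.rpow_nonneg (norm_nonneg _) _)
                (mul_nonneg hK0.le (Real.rpow_nonneg h1t.le _))
          _ = K * (1-t)^(b-a-1) := by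
              rw [mul_assoc, ← Real.rpow_add h1t, show b - 1 + -a = b - a - 1 from by ring]
      have hbd3 : ∀ t ∈ Set.Ioo m 1,
          (Real.log (1/t))^(b-1) * (‖1 - (t:ℂ)*z‖)^(-a)
            ≤ (K * δ^(-a)) * (1-t)^(b-1) := by
        intro t ht
        have ht' : t ∈ Set.Ioo ((1:ℝ)/2) 1 := ⟨lt_of_le_of_lt hm1 ht.1, ht.2⟩
        have h1t : (0:ℝ) < 1 - t := by linarith [ht.2]
        have hL := hKb t ht'
        have hMδ : δ ≤ ‖1 - (t:ℂ)*z‖ := by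
          have h := lema_M_lb2 hz (by linarith [ht'.1] : (0:ℝ) ≤ t) ht.2.le
          rw [hδdef, hεdef]
          linarith
        have hM : (‖1 - (t:ℂ)*z‖)^(-a) ≤ δ^(-a) :=
          Real.rpow_le_rpow_of_nonpos hδ0 hMδ (by linarith)
        calc (Real.log (1/t))^(b-1) * (‖1 - (t:ℂ)*z‖)^(-a)
            ≤ (K * (1-t)^(b-1)) * (δ^(-a)) :=
              mul_le_mul hL hM (Real.rpow_nonneg (norm_nonneg _) _)
                (mul_nonneg hK0.le (Real.rpow_nonneg h1t.le _))
          _ = (K * δ^(-a)) * (1-t)^(b-1) := by ring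
      -- integrability of the majorants
      have hg2 : IntegrableOn (fun t : ℝ => K * (1-t)^(b-a-1)) (Set.Ioc ((1:ℝ)/2) m) := by
        apply Integrable.const_mul
        apply IntegrableOn.mono_set _ Set.Ioc_subset_Icc_self
        apply ContinuousOn.integrableOn_compact isCompact_Icc
        apply ContinuousOn.rpow_const (continuous_const.sub continuous_id).continuousOn
        intro x hx
        refine Or.inl (ne_of_gt ?_)
        simp only [Set.mem_Icc] at hx
        simp only [Pi.sub_apply, id_eq]
        linarith [hx.2, hm2]
      have hg3 : IntegrableOn (fun t : ℝ => (K * δ^(-a)) * (1-t)^(b-1)) (Set.Ioo m 1) := by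
        apply Integrable.const_mul
        apply IntegrableOn.mono_set _ Set.Ioo_subset_Ioc_self
        have h := (intervalIntegral.intervalIntegrable_rpow' (a := 1-m) (b := 0)
          (by linarith : (-1:ℝ) < b - 1)).comp_sub_left 1
        simp only [sub_sub_cancel, sub_zero] at h
        rw [intervalIntegrable_iff, Set.uIoc_of_le hm2.le] at h
        exact h
      obtain ⟨hi1, he1⟩ := hP1 z hz
      obtain ⟨hi2, he2⟩ := lema_piece measurableSet_Ioc (hmf z _) hg2
        (fun t ht => hf0 z t ⟨by linarith [ht.1], lt_of_le_of_lt ht.2 hm2⟩) hbd2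
      obtain ⟨hi3, he3⟩ := lema_piece measurableSet_Ioo (hmf z _) hg3
        (fun t ht => hf0 z t ⟨by linarith [ht.1, hm1], ht.2⟩) hbd3
      have hEq2 : (∫ t in Set.Ioo ((1:ℝ)/2) 1,
            (Real.log (1/t))^(b-1) * (‖1 - (t:ℂ)*z‖)^(-a))
          = (∫ t in Set.Ioc ((1:ℝ)/2) m,
            (Real.log (1/t))^(b-1) * (‖1 - (t:ℂ)*z‖)^(-a))
          + ∫ t in Set.Ioo m 1,
            (Real.log (1/t))^(b-1) * (‖1 - (t:ℂ)*z‖)^(-a) := by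
        rw [← Set.Ioc_union_Ioo_eq_Ioo hm1 hm2]
        exact setIntegral_union
          (Set.disjoint_left.mpr fun x hx hx' => absurd hx.2 (not_le.mpr hx'.1))
          measurableSet_Ioo hi2 hi3
      have hEq1 : (∫ t in Set.Ioo (0:ℝ) 1,
            (Real.log (1/t))^(b-1) * (‖1 - (t:ℂ)*z‖)^(-a))
          = (∫ t in Set.Ioc (0:ℝ) (1/2),
            (Real.log (1/t))^(b-1) * (‖1 - (t:ℂ)*z‖)^(-a))
          + ∫ t in Set.Ioo ((1:ℝ)/2) 1,
            (Real.log (1/t))^(b-1) * (‖1 - (t:ℂ)*z‖)^(-a) := by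
        rw [← Set.Ioc_union_Ioo_eq_Ioo (by norm_num : (0:ℝ) ≤ 1/2) (by norm_num : (1:ℝ)/2 < 1)]
        refine setIntegral_union
          (Set.disjoint_left.mpr fun x hx hx' => absurd hx.2 (not_le.mpr hx'.1))
          measurableSet_Ioo hi1 ?_
        rw [← Set.Ioc_union_Ioo_eq_Ioo hm1 hm2]
        exact hi2.union hi3
      -- integral values of majorants
      have flip : ∀ p q : ℝ, (p - q)/(b-a) = (q - p)/(a-b) := fun p q => by
        rw [div_eq_div_iff (by linarith) (by linarith)]; ring
      have hJ1 : (∫ t in Set.Ioc ((1:ℝ)/2) m, K * (1-t)^(b-a-1))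
          ≤ K * (2^(a-b) * δ^(b-a)) / (a-b) := by
        rw [MeasureTheory.integral_const_mul,
          lema_int_one_sub (b-a-1) hm1 (Or.inr ⟨by linarith, hm2⟩),
          show b-a-1+1 = b-a from by ring, flip]
        have hx : (0:ℝ) ≤ ((1:ℝ)-1/2)^(b-a) := Real.rpow_nonneg (by norm_num) _
        rw [mul_div_assoc]
        apply mul_le_mul_of_nonneg_left _ hK0.le
        exact (div_le_div_iff_of_pos_right hab).mpr (by linarith [hkey, hx])
      have hJ2 : (∫ t in Set.Ioo m 1, (K * δ^(-a)) * (1-t)^(b-1)) ≤ (K/b) * δ^(b-a) := by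
        rw [← MeasureTheory.integral_Ioc_eq_integral_Ioo, MeasureTheory.integral_const_mul,
          lema_int_one_sub (b-1) hm2.le (Or.inl (by linarith)),
          show b-1+1 = b from by ring, sub_self, Real.zero_rpow (ne_of_gt hb), sub_zero]
        have h1 : (1-m)^b ≤ δ^b := Real.rpow_le_rpow h1m0.le h1mδ hb.le
        have h2 : δ^(-a) * δ^b = δ^(b-a) := by
          rw [← Real.rpow_add hδ0]; congr 1; ring
        have hδa : (0:ℝ) ≤ δ^(-a) := Real.rpow_nonneg hδ0.le _
        calc K * δ^(-a) * ((1-m)^b / b) ≤ K * δ^(-a) * (δ^b / b) := by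
              apply mul_le_mul_of_nonneg_left _ (mul_nonneg hK0.le hδa)
              exact (div_le_div_iff_of_pos_right hb).mpr h1
          _ = (K/b) * δ^(b-a) := by rw [← h2]; ring
      have htot : (∫ t in Set.Ioo (0:ℝ) 1,
            (Real.log (1/t))^(b-1) * (‖1 - (t:ℂ)*z‖)^(-a))
          ≤ 2^a * c0 + (K * (2^(a-b) * δ^(b-a)) / (a-b) + (K/b) * δ^(b-a)) := by
        rw [hEq1, hEq2]
        exact add_le_add he1 (add_le_add (he2.trans hJ1) (he3.trans hJ2))
      have hstep : 2^a * c0 + (K * (2^(a-b) * δ^(b-a)) / (a-b) + (K/b) * δ^(b-a))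
          ≤ (2^a * c0 + K * 2^(a-b)/(a-b) + K/b) * δ^(b-a) := by
        have h1 : 2^a * c0 ≤ (2^a * c0) * δ^(b-a) := by
          nlinarith [mul_nonneg h2a.le hc00]
        have h2 : K * (2^(a-b) * δ^(b-a)) / (a-b) = (K * 2^(a-b)/(a-b)) * δ^(b-a) := by
          field_simp
        linarith [h1, h2.le, h2.ge]
      have hfin : (2^a * c0 + K * 2^(a-b)/(a-b) + K/b) * δ^(b-a)
          = (2^a * c0 + K * 2^(a-b)/(a-b) + K/b) * 2^(a-b) * ε^(b-a) := by
        have hsplitδ : (ε/2)^(b-a) = 2^(a-b) * ε^(b-a) := by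
          rw [Real.div_rpow (by linarith : (0:ℝ) ≤ ε) (by norm_num : (0:ℝ) ≤ 2),
            div_eq_mul_inv, ← Real.rpow_neg (by norm_num : (0:ℝ) ≤ 2), neg_sub, mul_comm]
        rw [hδdef, hsplitδ]
        ring
      calc (∫ t in Set.Ioo (0:ℝ) 1,
            (Real.log (1/t))^(b-1) * (‖1 - (t:ℂ)*z‖)^(-a))
          ≤ 2^a * c0 + (K * (2^(a-b) * δ^(b-a)) / (a-b) + (K/b) * δ^(b-a)) := htot
        _ ≤ (2^a * c0 + K * 2^(a-b)/(a-b) + K/b) * δ^(b-a) := hstep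
        _ = (2^a * c0 + K * 2^(a-b)/(a-b) + K/b) * 2^(a-b) * ε^(b-a) := hfin
  · -- case a < b
    intro hab2
    have hba : (0:ℝ) < b - a := by linarith
    refine ⟨2^a * c0 + K * (((1:ℝ)/2)^(b-a)/(b-a)) + 1, ?_, fun z hz => ?_⟩
    · have h1 : (0:ℝ) ≤ 2^a * c0 := mul_nonneg h2a.le hc00
      have h2 : (0:ℝ) ≤ K * (((1:ℝ)/2)^(b-a)/(b-a)) :=
        mul_nonneg hK0.le (div_nonneg (Real.rpow_nonneg (by norm_num) _) hba.le)
      linarith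
    · have hbd2 : ∀ t ∈ Set.Ioo ((1:ℝ)/2) 1,
          (Real.log (1/t))^(b-1) * (‖1 - (t:ℂ)*z‖)^(-a)
            ≤ K * (1-t)^(b-a-1) := by
        intro t ht
        have h1t : (0:ℝ) < 1 - t := by linarith [ht.2]
        have hL := hKb t ht
        have hM : (‖1 - (t:ℂ)*z‖)^(-a) ≤ (1-t)^(-a) :=
          Real.rpow_le_rpow_of_nonpos h1t (hMlb z hz t ht) (by linarith)
        calc (Real.log (1/t))^(b-1) * (‖1 - (t:ℂ)*z‖)^(-a)
            ≤ (K * (1-t)^(b-1)) * ((1-t)^(-a)) :=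
              mul_le_mul hL hM (Real.rpow_nonneg (norm_nonneg _) _)
                (mul_nonneg hK0.le (Real.rpow_nonneg h1t.le _))
          _ = K * (1-t)^(b-a-1) := by
              rw [mul_assoc, ← Real.rpow_add h1t, show b - 1 + -a = b - a - 1 from by ring]
      have hg2 : IntegrableOn (fun t : ℝ => K * (1-t)^(b-a-1)) (Set.Ioo ((1:ℝ)/2) 1) := by
        apply Integrable.const_mul
        apply IntegrableOn.mono_set _ Set.Ioo_subset_Ioc_self
        have h := (intervalIntegral.intervalIntegrable_rpow' (a := 1/2) (b := 0)
          (by linarith : (-1:ℝ) < b - a - 1)).comp_sub_left 1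
        simp only [show (1:ℝ) - 1/2 = 1/2 from by norm_num, sub_zero] at h
        rw [intervalIntegrable_iff, Set.uIoc_of_le (by norm_num : (1:ℝ)/2 ≤ 1)] at h
        exact h
      obtain ⟨hi1, he1⟩ := hP1 z hz
      obtain ⟨hi2, he2⟩ := lema_piece measurableSet_Ioo (hmf z _) hg2
        (fun t ht => hf0 z t ⟨by linarith [ht.1], ht.2⟩) hbd2
      have hEq1 : (∫ t in Set.Ioo (0:ℝ) 1,
            (Real.log (1/t))^(b-1) * (‖1 - (t:ℂ)*z‖)^(-a))
          = (∫ t in Set.Ioc (0:ℝ) (1/2),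
            (Real.log (1/t))^(b-1) * (‖1 - (t:ℂ)*z‖)^(-a))
          + ∫ t in Set.Ioo ((1:ℝ)/2) 1,
            (Real.log (1/t))^(b-1) * (‖1 - (t:ℂ)*z‖)^(-a) := by
        rw [← Set.Ioc_union_Ioo_eq_Ioo (by norm_num : (0:ℝ) ≤ 1/2) (by norm_num : (1:ℝ)/2 < 1)]
        exact setIntegral_union
          (Set.disjoint_left.mpr fun x hx hx' => absurd hx.2 (not_le.mpr hx'.1))
          measurableSet_Ioo hi1 hi2
      have hJ : (∫ t in Set.Ioo ((1:ℝ)/2) 1, K * (1-t)^(b-a-1))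
          = K * (((1:ℝ)/2)^(b-a)/(b-a)) := by
        rw [← MeasureTheory.integral_Ioc_eq_integral_Ioo, MeasureTheory.integral_const_mul,
          lema_int_one_sub (b-a-1) (by norm_num) (Or.inl (by linarith)),
          show b-a-1+1 = b-a from by ring, sub_self, Real.zero_rpow (ne_of_gt hba), sub_zero,
          show (1:ℝ) - 1/2 = 1/2 from by norm_num]
      rw [hEq1]
      have := he2.trans_eq hJ
      linarith [he1, this]
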